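/- With notation as in the 3×3-diagram of inclusions with d∘d = 0, the homology of E₁^C → E₁^E → E₁^G at the middle term is isomorphic to E^E_∞ = Im(H(B→E→H) → H(C→F→I)) / Im(H(A→D→G) → H(C→F→I)). -/

import Mathlib

/-! The `3×3`-lemma setup underlying the construction of a spectral sequence:
a commutative `3×3` diagram of `R`-modules whose rows are inclusions
`A ↪ B ↪ C`, `D ↪ E ↪ F`, `G ↪ H ↪ I` and whose columns carry differentials
`d : C → F → I` with `d ∘ d = 0`, restricting to the submodule towers.
We realise the top row as submodules `A ≤ B` of `M₁ = C`, the middle row as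
`D ≤ E` of `M₂ = F`, and the bottom row as `G ≤ H` of `M₃ = I`, with
differentials `f : M₁ → M₂`, `g : M₂ → M₃`. -/

namespace TT

variable {R : Type} [CommRing R]
variable {M₁ M₂ M₃ : Type}
variable [AddCommGroup M₁] [AddCommGroup M₂] [AddCommGroup M₃]
variable [Module R M₁] [Module R M₂] [Module R M₃]
variable (f : M₁ →ₗ[R] M₂) (g : M₂ →ₗ[R] M₃)
variable (A B : Submodule R M₁) (D E : Submodule R M₂) (G H : Submodule R M₃)

/-- `B/A`. -/
abbrev QB : Type := ↥B ⧸ (A.comap B.subtype)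

/-- `E/D`. -/
abbrev QE : Type := ↥E ⧸ (D.comap E.subtype)

/-- `H/G`. -/
abbrev QH : Type := ↥H ⧸ (G.comap H.subtype)

/-- The map `B/A → E/D` induced by `d`. -/
noncomputable def phi (hfB : ∀ x ∈ B, f x ∈ E) (hfA : ∀ x ∈ A, f x ∈ D) :
    QB A B →ₗ[R] QE D E :=
  Submodule.mapQ _ _ (f.restrict hfB) (fun x hx => hfA x.1 hx)

/-- The map `E/D → H/G` induced by `d`. -/
noncomputable def psi (hgE : ∀ x ∈ E, g x ∈ H) (hgD : ∀ x ∈ D, g x ∈ G) :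
    QE D E →ₗ[R] QH G H :=
  Submodule.mapQ _ _ (g.restrict hgE) (fun x hx => hgD x.1 hx)

/-- `E₁ᴱ = H(B/A → E/D → H/G)`, the homology of the middle column of the
quotient complex. -/
abbrev E1E (hfB : ∀ x ∈ B, f x ∈ E) (hfA : ∀ x ∈ A, f x ∈ D)
    (hgE : ∀ x ∈ E, g x ∈ H) (hgD : ∀ x ∈ D, g x ∈ G) : Type :=
  ↥(LinearMap.ker (psi g D E G H hgE hgD)) ⧸
    ((LinearMap.range (phi f A B D E hfB hfA)).comap
      (LinearMap.ker (psi g D E G H hgE hgD)).subtype)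

/-- The map `C/B → F/E` induced by `d`. -/
noncomputable def fCB (hfB : ∀ x ∈ B, f x ∈ E) : (M₁ ⧸ B) →ₗ[R] (M₂ ⧸ E) :=
  Submodule.mapQ B E f hfB

/-- `E₁ᶜ = H(0 → C/B → F/E) = ker(C/B → F/E)`. -/
abbrev E1C (hfB : ∀ x ∈ B, f x ∈ E) : Type :=
  ↥(LinearMap.ker (fCB f B E hfB))

/-- `E₁ᴳ = H(D → G → 0) = G / im(D → G)`. -/
abbrev E1G : Type := ↥G ⧸ ((D.map g).comap G.subtype)

end TT


namespace TT

variable {R : Type} [CommRing R]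
variable {M₁ M₂ M₃ : Type}
variable [AddCommGroup M₁] [AddCommGroup M₂] [AddCommGroup M₃]
variable [Module R M₁] [Module R M₂] [Module R M₃]
variable (f : M₁ →ₗ[R] M₂) (g : M₂ →ₗ[R] M₃)
variable (A B : Submodule R M₁) (D E : Submodule R M₂) (G H : Submodule R M₃)

/-- `H(C → F → I) = ker g / im f`. -/
abbrev HCFI : Type :=
  ↥(LinearMap.ker g) ⧸
    ((LinearMap.range f).comap (LinearMap.ker g).subtype)

/-- The image of `H(B → E → H)` in `H(C → F → I)`: classes of cycles lying
in `E`. -/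
noncomputable def S1 : Submodule R (HCFI f g) :=
  Submodule.map (Submodule.mkQ _) (E.comap (LinearMap.ker g).subtype)

/-- The image of `H(A → D → G)` in `H(C → F → I)`: classes of cycles lying
in `D`. -/
noncomputable def S2 : Submodule R (HCFI f g) :=
  Submodule.map (Submodule.mkQ _) (D.comap (LinearMap.ker g).subtype)

/-- `E^E_∞ = Im(H(B→E→H) → H(C→F→I)) / Im(H(A→D→G) → H(C→F→I))`. -/
abbrev Einfty : Type :=
  ↥(S1 f g E) ⧸ ((S2 f g D).comap (S1 f g E).subtype)

end TT

namespace SpecAux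
open TT

variable {R : Type} [CommRing R]
variable {M₁ M₂ M₃ : Type}
variable [AddCommGroup M₁] [AddCommGroup M₂] [AddCommGroup M₃]
variable [Module R M₁] [Module R M₂] [Module R M₃]
variable (f : M₁ →ₗ[R] M₂) (g : M₂ →ₗ[R] M₃)
variable (A B : Submodule R M₁) (D E : Submodule R M₂) (G H : Submodule R M₃)

/-- The submodule of cycles lying in `E`, inside `ker g`. -/
noncomputable def P : Submodule R ↥(LinearMap.ker g) :=
  E.comap (LinearMap.ker g).subtype

/-- The natural map `P → E^E_∞`. -/
noncomputable def Vmap : ↥(P g E) →ₗ[R] Einfty f g D E :=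
  (Submodule.mkQ _).comp
    (LinearMap.codRestrict (S1 f g E)
      ((Submodule.mkQ _).comp (P g E).subtype)
      (fun z => Submodule.mem_map.mpr ⟨z.1, z.2, rfl⟩))

section maps

variable (hgE : ∀ x ∈ E, g x ∈ H) (hgD : ∀ x ∈ D, g x ∈ G)

lemma mem_ker_psi (y : M₂) (hy : y ∈ E) (hgy : g y ∈ G) :
    (Submodule.Quotient.mk (⟨y, hy⟩ : ↥E) : QE D E) ∈
      LinearMap.ker (psi g D E G H hgE hgD) := by
  rw [LinearMap.mem_ker]
  show (Submodule.Quotient.mk (g.restrict hgE ⟨y, hy⟩) : QH G H) = 0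
  rw [Submodule.Quotient.mk_eq_zero]
  exact hgy

/-- `P → E`. -/
noncomputable def toE : ↥(P g E) →ₗ[R] ↥E :=
  LinearMap.codRestrict E ((LinearMap.ker g).subtype.comp (P g E).subtype)
    (fun z => z.2)

/-- `P → ker ψ`. -/
noncomputable def toKerPsi :
    ↥(P g E) →ₗ[R] ↥(LinearMap.ker (psi g D E G H hgE hgD)) :=
  LinearMap.codRestrict _ ((Submodule.mkQ _).comp (toE g E)) (fun z =>
    mem_ker_psi g D E G H hgE hgD _ z.2
      (by rw [Submodule.subtype_apply, LinearMap.mem_ker.mp z.1.2]; exact G.zero_mem))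

variable (hfB : ∀ x ∈ B, f x ∈ E) (hfA : ∀ x ∈ A, f x ∈ D)

/-- `P → E₁ᴱ`. -/
noncomputable def toE1E : ↥(P g E) →ₗ[R] E1E f g A B D E G H hfB hfA hgE hgD :=
  (Submodule.mkQ _).comp (toKerPsi g D E G H hgE hgD)

/-- `P → LHS homology`. -/
noncomputable def Wmap
    (δC : E1C f B E hfB →ₗ[R] E1E f g A B D E G H hfB hfA hgE hgD)
    (δE : E1E f g A B D E G H hfB hfA hgE hgD →ₗ[R] E1G g D G)
    (hδE : ∀ (y : M₂) (hy : y ∈ E)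
        (hq : (Submodule.Quotient.mk (⟨y, hy⟩ : ↥E) : QE D E) ∈
          LinearMap.ker (psi g D E G H hgE hgD))
        (hgy : g y ∈ G),
      δE (Submodule.Quotient.mk
          (⟨Submodule.Quotient.mk (⟨y, hy⟩ : ↥E), hq⟩ :
            ↥(LinearMap.ker (psi g D E G H hgE hgD)))) =
        Submodule.Quotient.mk (⟨g y, hgy⟩ : ↥G)) :
    ↥(P g E) →ₗ[R] (↥(LinearMap.ker δE) ⧸
      ((LinearMap.range δC).comap (LinearMap.ker δE).subtype)) :=
  (Submodule.mkQ _).comp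
    (LinearMap.codRestrict (LinearMap.ker δE)
      (toE1E f g A B D E G H hgE hgD hfB hfA) (fun z => by
        have hgz : g ((LinearMap.ker g).subtype z.1) = 0 := LinearMap.mem_ker.mp z.1.2
        have hgy : g ((LinearMap.ker g).subtype z.1) ∈ G := by
          rw [hgz]; exact G.zero_mem
        have hq := mem_ker_psi g D E G H hgE hgD _ z.2 hgy
        rw [LinearMap.mem_ker]
        show δE (Submodule.Quotient.mk
          (⟨Submodule.Quotient.mk
              (⟨(LinearMap.ker g).subtype z.1, z.2⟩ : ↥E), hq⟩ :
            ↥(LinearMap.ker (psi g D E G H hgE hgD)))) = 0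
        rw [hδE _ z.2 hq hgy,
          show (⟨g ((LinearMap.ker g).subtype z.1), hgy⟩ : ↥G) = 0 from
            Subtype.ext hgz]
        exact (Submodule.mkQ _).map_zero))

set_option maxHeartbeats 1000000 in
lemma Wmap_eq_zero_iff
    (δC : E1C f B E hfB →ₗ[R] E1E f g A B D E G H hfB hfA hgE hgD)
    (δE : E1E f g A B D E G H hfB hfA hgE hgD →ₗ[R] E1G g D G)
    (hδE : ∀ (y : M₂) (hy : y ∈ E)
        (hq : (Submodule.Quotient.mk (⟨y, hy⟩ : ↥E) : QE D E) ∈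
          LinearMap.ker (psi g D E G H hgE hgD))
        (hgy : g y ∈ G),
      δE (Submodule.Quotient.mk
          (⟨Submodule.Quotient.mk (⟨y, hy⟩ : ↥E), hq⟩ :
            ↥(LinearMap.ker (psi g D E G H hgE hgD)))) =
        Submodule.Quotient.mk (⟨g y, hgy⟩ : ↥G))
    (z : ↥(P g E)) :
    Wmap f g A B D E G H hgE hgD hfB hfA δC δE hδE z = 0 ↔
      toE1E f g A B D E G H hgE hgD hfB hfA z ∈ LinearMap.range δC := by
  show Submodule.Quotient.mk _ = _ ↔ _
  rw [Submodule.Quotient.mk_eq_zero]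
  exact Iff.rfl

lemma Vmap_eq_zero_iff (z : ↥(P g E)) :
    Vmap f g D E z = 0 ↔
      (Submodule.Quotient.mk z.1 : HCFI f g) ∈ S2 f g D := by
  show Submodule.Quotient.mk _ = _ ↔ _
  rw [Submodule.Quotient.mk_eq_zero]
  exact Iff.rfl

lemma key (hd : g.comp f = 0) (hDE : D ≤ E)
    (δC : E1C f B E hfB →ₗ[R] E1E f g A B D E G H hfB hfA hgE hgD)
    (hδC : ∀ (c : M₁) (hc : Submodule.Quotient.mk c ∈ LinearMap.ker (fCB f B E hfB))
        (hfc : f c ∈ E)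
        (hker : (Submodule.Quotient.mk (⟨f c, hfc⟩ : ↥E) : QE D E) ∈
          LinearMap.ker (psi g D E G H hgE hgD)),
      δC ⟨Submodule.Quotient.mk c, hc⟩ =
        Submodule.Quotient.mk
          (⟨Submodule.Quotient.mk (⟨f c, hfc⟩ : ↥E), hker⟩ :
            ↥(LinearMap.ker (psi g D E G H hgE hgD))))
    (z : ↥(P g E)) :
    toE1E f g A B D E G H hgE hgD hfB hfA z ∈ LinearMap.range δC ↔
      (Submodule.Quotient.mk z.1 : HCFI f g) ∈ S2 f g D := by
  constructor
  · intro hC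
    refine (LinearMap.mem_range.mp hC).elim fun c hc => ?_
    refine (Submodule.Quotient.mk_surjective B c.1).elim fun c' hc' => ?_
    have hfcE : f c' ∈ E := by
      have h := c.2
      rw [← hc', LinearMap.mem_ker, fCB, Submodule.mapQ_apply,
        Submodule.Quotient.mk_eq_zero] at h
      exact h
    have hgfc : g (f c') = 0 := by simpa using LinearMap.congr_fun hd c'
    have hgfcG : g (f c') ∈ G := by rw [hgfc]; exact G.zero_mem
    have hqc := mem_ker_psi g D E G H hgE hgD _ hfcE hgfcG
    have hcmem : (Submodule.Quotient.mk c' : M₁ ⧸ B) ∈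
        LinearMap.ker (fCB f B E hfB) := by
      rw [LinearMap.mem_ker, fCB, Submodule.mapQ_apply,
        Submodule.Quotient.mk_eq_zero]
      exact hfcE
    rw [show c = (⟨Submodule.Quotient.mk c', hcmem⟩ : E1C f B E hfB) from
        Subtype.ext hc'.symm, hδC c' hcmem hfcE hqc] at hc
    have hc' : (Submodule.Quotient.mk
        (⟨Submodule.Quotient.mk (⟨f c', hfcE⟩ : ↥E), hqc⟩ :
          ↥(LinearMap.ker (psi g D E G H hgE hgD))) :
        E1E f g A B D E G H hfB hfA hgE hgD) =
        Submodule.Quotient.mk (toKerPsi g D E G H hgE hgD z) := hc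
    have hc2 := (Submodule.Quotient.eq _).mp hc'
    have hc3 := Submodule.mem_comap.mp hc2
    refine (LinearMap.mem_range.mp hc3).elim fun b hb => ?_
    refine (Submodule.Quotient.mk_surjective (A.comap B.subtype) b).elim
      fun bB hbB => ?_
    rw [← hbB] at hb
    have hb' : (Submodule.Quotient.mk (f.restrict hfB bB) : QE D E) =
        Submodule.Quotient.mk
          ((⟨f c', hfcE⟩ : ↥E) - ⟨(LinearMap.ker g).subtype z.1, z.2⟩) := hb
    have hD0 := (Submodule.Quotient.eq _).mp hb'
    have hD0' : f bB - (f c' - (LinearMap.ker g).subtype z.1) ∈ D := hD0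
    have hk : g (f bB - (f c' - (LinearMap.ker g).subtype z.1)) = 0 := by
      have h1 : g (f (bB : M₁)) = 0 := by simpa using LinearMap.congr_fun hd (bB : M₁)
      have h2 : g ((LinearMap.ker g).subtype z.1) = 0 := LinearMap.mem_ker.mp z.1.2
      rw [map_sub, map_sub, h1, hgfc, h2]
      abel
    refine Submodule.mem_map.mpr
      ⟨⟨f bB - (f c' - (LinearMap.ker g).subtype z.1), LinearMap.mem_ker.mpr hk⟩,
        hD0', ?_⟩
    rw [Submodule.mkQ_apply]
    refine (Submodule.Quotient.eq _).mpr ?_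
    refine Submodule.mem_comap.mpr (LinearMap.mem_range.mpr ⟨(bB : M₁) - c', ?_⟩)
    simp only [map_sub, Submodule.subtype_apply, AddSubgroupClass.coe_sub]
    abel
  · intro hS2
    refine (Submodule.mem_map.mp hS2).elim fun dk hdk => ?_
    have hdkD : (dk : M₂) ∈ D := hdk.1
    have hdkq : (Submodule.Quotient.mk dk : HCFI f g) =
        Submodule.Quotient.mk z.1 := by
      have := hdk.2
      rwa [Submodule.mkQ_apply] at this
    have h1 := Submodule.mem_comap.mp ((Submodule.Quotient.eq _).mp hdkq)
    refine (LinearMap.mem_range.mp h1).elim fun c' hc' => ?_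
    have hfc0 : f (-c') = (LinearMap.ker g).subtype z.1 -
        (LinearMap.ker g).subtype dk := by
      rw [map_neg, hc']
      simp only [map_sub, Submodule.subtype_apply, AddSubgroupClass.coe_sub]
      abel
    have hfc0E : f (-c') ∈ E := by
      rw [hfc0]; exact E.sub_mem z.2 (hDE hdkD)
    have hgfc0 : g (f (-c')) = 0 := by simpa using LinearMap.congr_fun hd (-c')
    have hgfc0G : g (f (-c')) ∈ G := by rw [hgfc0]; exact G.zero_mem
    have hq0 := mem_ker_psi g D E G H hgE hgD _ hfc0E hgfc0G
    have hmem0 : (Submodule.Quotient.mk (-c') : M₁ ⧸ B) ∈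
        LinearMap.ker (fCB f B E hfB) := by
      rw [LinearMap.mem_ker, fCB, Submodule.mapQ_apply,
        Submodule.Quotient.mk_eq_zero]
      exact hfc0E
    refine LinearMap.mem_range.mpr ⟨⟨Submodule.Quotient.mk (-c'), hmem0⟩, ?_⟩
    rw [hδC (-c') hmem0 hfc0E hq0]
    have hmemD : ((⟨f (-c'), hfc0E⟩ : ↥E) -
        ⟨(LinearMap.ker g).subtype z.1, z.2⟩ : ↥E) ∈ D.comap E.subtype := by
      refine Submodule.mem_comap.mpr ?_
      have hval : E.subtype ((⟨f (-c'), hfc0E⟩ : ↥E) -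
          ⟨(LinearMap.ker g).subtype z.1, z.2⟩) = -((dk : ↥(LinearMap.ker g)) : M₂) := by
        simp only [Submodule.subtype_apply, AddSubgroupClass.coe_sub, hfc0]
        abel
      rw [hval]
      exact D.neg_mem hdkD
    refine (Submodule.Quotient.eq _).mpr ?_
    refine Submodule.mem_comap.mpr ?_
    have hv : (LinearMap.ker (psi g D E G H hgE hgD)).subtype
        ((⟨Submodule.Quotient.mk (⟨f (-c'), hfc0E⟩ : ↥E), hq0⟩ :
          ↥(LinearMap.ker (psi g D E G H hgE hgD))) -
          toKerPsi g D E G H hgE hgD z) =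
        (Submodule.Quotient.mk ((⟨f (-c'), hfc0E⟩ : ↥E) -
          ⟨(LinearMap.ker g).subtype z.1, z.2⟩) : QE D E) := rfl
    rw [hv, (Submodule.Quotient.mk_eq_zero _).mpr hmemD]
    exact Submodule.zero_mem _

end maps

end SpecAux

set_option maxHeartbeats 2000000 in
open TT in
/-- With notation as in the `3×3` diagram of inclusions with `d ∘ d = 0`, for
any differentials `δC : E₁ᶜ → E₁ᴱ` and `δE : E₁ᴱ → E₁ᴳ` induced by `d`, the
homology of `E₁ᶜ → E₁ᴱ → E₁ᴳ` at the middle term is isomorphic to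
`E^E_∞ = Im(H(B→E→H) → H(C→F→I)) / Im(H(A→D→G) → H(C→F→I))`. -/
theorem stmt_16 (R : Type) [CommRing R]
    (M₁ M₂ M₃ : Type)
    [AddCommGroup M₁] [AddCommGroup M₂] [AddCommGroup M₃]
    [Module R M₁] [Module R M₂] [Module R M₃]
    (f : M₁ →ₗ[R] M₂) (g : M₂ →ₗ[R] M₃) (hd : g.comp f = 0)
    (A B : Submodule R M₁) (D E : Submodule R M₂) (G H : Submodule R M₃)
    (hAB : A ≤ B) (hDE : D ≤ E) (hGH : G ≤ H)
    (hfA : ∀ x ∈ A, f x ∈ D) (hfB : ∀ x ∈ B, f x ∈ E)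
    (hgD : ∀ x ∈ D, g x ∈ G) (hgE : ∀ x ∈ E, g x ∈ H)
    (δC : E1C f B E hfB →ₗ[R] E1E f g A B D E G H hfB hfA hgE hgD)
    (δE : E1E f g A B D E G H hfB hfA hgE hgD →ₗ[R] E1G g D G)
    (hδC : ∀ (c : M₁) (hc : Submodule.Quotient.mk c ∈ LinearMap.ker (fCB f B E hfB))
        (hfc : f c ∈ E)
        (hker : (Submodule.Quotient.mk (⟨f c, hfc⟩ : ↥E) : QE D E) ∈
          LinearMap.ker (psi g D E G H hgE hgD)),
      δC ⟨Submodule.Quotient.mk c, hc⟩ =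
        Submodule.Quotient.mk
          (⟨Submodule.Quotient.mk (⟨f c, hfc⟩ : ↥E), hker⟩ :
            ↥(LinearMap.ker (psi g D E G H hgE hgD))))
    (hδE : ∀ (y : M₂) (hy : y ∈ E)
        (hq : (Submodule.Quotient.mk (⟨y, hy⟩ : ↥E) : QE D E) ∈
          LinearMap.ker (psi g D E G H hgE hgD))
        (hgy : g y ∈ G),
      δE (Submodule.Quotient.mk
          (⟨Submodule.Quotient.mk (⟨y, hy⟩ : ↥E), hq⟩ :
            ↥(LinearMap.ker (psi g D E G H hgE hgD)))) =
        Submodule.Quotient.mk (⟨g y, hgy⟩ : ↥G)) :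
    Nonempty
      ((↥(LinearMap.ker δE) ⧸
          ((LinearMap.range δC).comap (LinearMap.ker δE).subtype))
        ≃ₗ[R] Einfty f g D E) := by
  classical
  have hVsurj : Function.Surjective (SpecAux.Vmap f g D E) := by
    intro x
    obtain ⟨s, rfl⟩ := Submodule.mkQ_surjective _ x
    obtain ⟨z, hz, hzs⟩ := s.2
    exact ⟨⟨z, hz⟩, congrArg (Submodule.mkQ _) (Subtype.ext hzs)⟩
  have hWsurj : Function.Surjective (SpecAux.Wmap f g A B D E G H hgE hgD hfB hfA δC δE hδE) := by
    intro x
    obtain ⟨q⟩ := x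
    have hsur1 := Submodule.Quotient.mk_surjective
      ((LinearMap.range (phi f A B D E hfB hfA)).comap
        (LinearMap.ker (psi g D E G H hgE hgD)).subtype)
    refine (hsur1 q.1).elim fun a ha => ?_
    have hsur2 := Submodule.Quotient.mk_surjective (D.comap E.subtype)
    refine (hsur2 a.1).elim fun yE hyE => ?_
    have hgyG : g (yE : M₂) ∈ G := by
      have h := a.2
      rw [← hyE, LinearMap.mem_ker] at h
      change (Submodule.Quotient.mk (g.restrict hgE yE) : QH G H) = 0 at h
      rw [Submodule.Quotient.mk_eq_zero] at h
      exact h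
    have hq' : (Submodule.Quotient.mk (⟨(yE : M₂), yE.2⟩ : ↥E) : QE D E) ∈
        LinearMap.ker (psi g D E G H hgE hgD) :=
      SpecAux.mem_ker_psi g D E G H hgE hgD _ yE.2 hgyG
    have hδq : δE q.1 = Submodule.Quotient.mk (⟨g (yE : M₂), hgyG⟩ : ↥G) := by
      rw [← ha, show a = (⟨Submodule.Quotient.mk (⟨(yE : M₂), yE.2⟩ : ↥E), hq'⟩ :
        ↥(LinearMap.ker (psi g D E G H hgE hgD))) from Subtype.ext hyE.symm]
      exact hδE _ yE.2 hq' hgyG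
    have h0 : (Submodule.Quotient.mk (⟨g (yE : M₂), hgyG⟩ : ↥G) : E1G g D G) = 0 := by
      rw [← hδq]; exact q.2
    rw [Submodule.Quotient.mk_eq_zero] at h0
    refine (Submodule.mem_map.mp (Submodule.mem_comap.mp h0)).elim fun d hd0 => ?_
    have hdD := hd0.1
    have hd := hd0.2
    have hzE : (yE : M₂) - d ∈ E := E.sub_mem yE.2 (hDE hdD)
    have hd' : g d = g (yE : M₂) := by rw [hd]; rfl
    have hzK : (yE : M₂) - d ∈ LinearMap.ker g := by
      rw [LinearMap.mem_ker, map_sub, hd', sub_self]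
    refine ⟨⟨⟨(yE : M₂) - d, hzK⟩, hzE⟩, ?_⟩
    show SpecAux.Wmap f g A B D E G H hgE hgD hfB hfA δC δE hδE
        ⟨⟨(yE : M₂) - d, hzK⟩, hzE⟩ = Submodule.Quotient.mk q
    refine congrArg (Submodule.mkQ _) (Subtype.ext ?_)
    show (Submodule.Quotient.mk
        (SpecAux.toKerPsi g D E G H hgE hgD ⟨⟨(yE : M₂) - d, hzK⟩, hzE⟩) :
        E1E f g A B D E G H hfB hfA hgE hgD) = q.1
    rw [← ha]
    refine congrArg (Submodule.mkQ _) (Subtype.ext ?_)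
    show (Submodule.Quotient.mk (⟨(yE : M₂) - d, hzE⟩ : ↥E) : QE D E) = a.1
    rw [← hyE, Submodule.Quotient.eq]
    show ((⟨(yE : M₂) - d, hzE⟩ : ↥E) - yE : ↥E) ∈ D.comap E.subtype
    have hval : (((⟨(yE : M₂) - d, hzE⟩ : ↥E) - yE : ↥E) : M₂) = -d := by
      simp
    rw [Submodule.mem_comap, Submodule.subtype_apply, hval]
    exact D.neg_mem hdD
  have hkereq : LinearMap.ker (SpecAux.Wmap f g A B D E G H hgE hgD hfB hfA δC δE hδE) = LinearMap.ker (SpecAux.Vmap f g D E) := by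
    ext z
    rw [LinearMap.mem_ker, LinearMap.mem_ker,
      SpecAux.Wmap_eq_zero_iff f g A B D E G H hgE hgD hfB hfA δC δE hδE z,
      SpecAux.Vmap_eq_zero_iff f g D E z]
    exact SpecAux.key f g A B D E G H hgE hgD hfB hfA hd hDE δC hδC z
  exact ⟨(LinearMap.quotKerEquivOfSurjective _ hWsurj).symm.trans
    ((Submodule.quotEquivOfEq _ _ hkereq).trans
      (LinearMap.quotKerEquivOfSurjective _ hVsurj))⟩
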